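/- For the uniform matroid U_{n,r} with 0 < r < n, the f-polynomial of the hypersimplex P_{U_{n,r}} = Δ_r^n is f(P_{U_{n,r}}, q) = C(n,r) + Σ_{0 ≤ r' < r < r'+λ ≤ n} C(n, r') C(n−r', λ) q^{λ−1}. Equivalently, the f-vector is f_0 = C(n,r) and, for k = 2,…,n, f_{k−1} = Σ_{0 ≤ r' < r < r'+k ≤ n} n!/(r'!·k!·(n−r'−k)!). -/

import Mathlib

open scoped Classical Pointwise BigOperators


/-- The dot product pairing on `ℝⁿ`. -/
def dotp {n : ℕ} (ω x : Fin n → ℝ) : ℝ := ∑ i, ω i * x i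

/-- The set of points of `Q` on which the linear functional `⟨ω, ·⟩` attains its maximum. -/
def argmaxSet {n : ℕ} (Q : Set (Fin n → ℝ)) (ω : Fin n → ℝ) : Set (Fin n → ℝ) :=
  {x | x ∈ Q ∧ ∀ y ∈ Q, dotp ω y ≤ dotp ω x}

/-- `G` is a face of `Q` : it is the argmax set of some linear functional. -/
def IsFace {n : ℕ} (Q G : Set (Fin n → ℝ)) : Prop := ∃ ω : Fin n → ℝ, G = argmaxSet Q ω

/-- The dimension of a convex body: the rank of its direction vector space. -/
noncomputable def pdim {n : ℕ} (s : Set (Fin n → ℝ)) : ℕ := Module.finrank ℝ (vectorSpan ℝ s)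

/-- `Q` is a (nonempty) convex polytope. -/
def IsPolytope {n : ℕ} (Q : Set (Fin n → ℝ)) : Prop :=
  ∃ V : Finset (Fin n → ℝ), V.Nonempty ∧ Q = convexHull ℝ (V : Set (Fin n → ℝ))

/-- A flag `∅ ⊂ F₁ ⊂ ⋯ ⊂ F_k ⊂ [n]` of subsets of `[n]`, recorded by its set
`C = {F₁,…,F_k}` of proper nonempty intermediate subsets, which form a chain. -/
def IsFlag (n : ℕ) (C : Finset (Finset (Fin n))) : Prop :=
  (∀ A ∈ C, A.Nonempty ∧ A ≠ Finset.univ) ∧ (∀ A ∈ C, ∀ B ∈ C, A ⊆ B ∨ B ⊆ A)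

/-- The level of an element: the number of members of the chain not containing it.  Elements of
`F_i ∖ F_{i-1}` have level `i - 1`-ish: level `0` on the smallest set, etc. -/
def lv {n : ℕ} (C : Finset (Finset (Fin n))) (p : Fin n) : ℕ := (C.filter (fun A => p ∉ A)).card

/-- The `j`-th member `F_j` of the full chain `∅ = F₀ ⊂ F₁ ⊂ ⋯ ⊂ F_{k+1} = [n]` of the flag. -/
def fullChain {n : ℕ} (C : Finset (Finset (Fin n))) (j : ℕ) : Finset (Fin n) :=
  Finset.univ.filter (fun p => lv C p < j)

/-- The type of a flag: the composition `(|F₁|-|F₀|, …, |F_{k+1}|-|F_k|)` of `n`. -/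
def flagType {n : ℕ} (C : Finset (Finset (Fin n))) : List ℕ :=
  (List.range (C.card + 1)).map (fun j => (fullChain C (j + 1)).card - (fullChain C j).card)

/-- The relative interior of the braid cone of a flag: weight vectors `ω` that are constant on
each block `F_i ∖ F_{i-1}` and satisfy `ω|_{F_{i+1}∖F_i} < ω|_{F_i∖F_{i-1}}` (strictly
decreasing along the flag). -/
def relintBraidCone {n : ℕ} (C : Finset (Finset (Fin n))) : Set (Fin n → ℝ) :=
  {x | ∀ p q : Fin n, ((∀ A ∈ C, (p ∈ A ↔ q ∈ A)) → x p = x q) ∧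
      ((∃ A ∈ C, p ∈ A ∧ q ∉ A) → x q < x p)}

/-- Homogeneous quasisymmetric functions in the monomial basis: finitely supported
coefficient functions on compositions (lists of positive integers). -/
abbrev QS : Type := (List ℕ) →₀ ℚ

/-- The monomial quasisymmetric function `M_α`. -/
noncomputable def Mc (l : List ℕ) : QS := Finsupp.single l 1

/-- The principal specialization at `-1`:  `ps(M_α)(-1) = (-1)^{k(α)}`, extended linearly. -/
noncomputable def psNeg (f : QS) : ℚ := f.sum (fun l c => c * (-1) ^ l.length)

/-- The `f`-polynomial of a polytope `P ⊆ ℝⁿ`, evaluated at `t`. -/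
noncomputable def fPoly {n : ℕ} (P : Set (Fin n → ℝ)) (t : ℚ) : ℚ :=
  ∑ i ∈ Finset.range n, ((Set.ncard {G : Set (Fin n → ℝ) | IsFace P G ∧ pdim G = i} : ℚ) * t ^ i)

/-- The weighted quasisymmetric enumerator `F_q(Q) = Σ_F q^{rk(F)} M_{type(F)}`, where the rank
statistic `rk` on flags is given as an argument. -/
noncomputable def FqEnum (n : ℕ) (rk : Finset (Finset (Fin n)) → ℕ) (q : ℚ) : QS :=
  ∑ C : Finset (Finset (Fin n)), if IsFlag n C then q ^ (rk C) • Mc (flagType C) else 0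

/-- A matroid on `[n]`, given by its nonempty collection of bases satisfying the exchange
property. -/
def IsMatroid (n : ℕ) (𝓑 : Finset (Finset (Fin n))) : Prop :=
  𝓑.Nonempty ∧
    ∀ B₁ ∈ 𝓑, ∀ B₂ ∈ 𝓑, ∀ i ∈ B₁ \ B₂, ∃ j ∈ B₂ \ B₁, insert j (B₁.erase i) ∈ 𝓑

/-- The indicator vector `e_B = Σ_{i ∈ B} e_i` of a subset `B ⊆ [n]`. -/
def indVec {n : ℕ} (B : Finset (Fin n)) : Fin n → ℝ := fun i => if i ∈ B then 1 else 0

/-- The matroid base polytope `P_M = Conv{e_B : B ∈ 𝓑(M)}`. -/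
noncomputable def basePoly {n : ℕ} (𝓑 : Finset (Finset (Fin n))) : Set (Fin n → ℝ) :=
  convexHull ℝ (indVec '' (𝓑 : Set (Finset (Fin n))))

/-- The basis-exchange relation whose equivalence classes are the connected components of the
matroid: `i ~ j` iff there are bases `B₁, B₂` with `i ∈ B₁` and `B₂ = (B₁ ∖ {i}) ∪ {j}`. -/
def mRel {n : ℕ} (𝓑 : Finset (Finset (Fin n))) (i j : Fin n) : Prop :=
  ∃ B₁ ∈ 𝓑, i ∈ B₁ ∧ insert j (B₁.erase i) ∈ 𝓑

/-- The number of connected components of (the matroid with bases) `𝓑` that meet the ground set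
`ground`: the number of equivalence classes of the component relation restricted to `ground`. -/
noncomputable def cOn {n : ℕ} (ground : Finset (Fin n)) (𝓑 : Finset (Finset (Fin n))) : ℕ :=
  Set.ncard (Quot.mk (mRel 𝓑) '' (ground : Set (Fin n)))

/-- A subset is independent if it is contained in a basis. -/
def mIndep {n : ℕ} (𝓑 : Finset (Finset (Fin n))) (I : Finset (Fin n)) : Prop :=
  ∃ B ∈ 𝓑, I ⊆ B

/-- The bases of the restriction `M|_A`: maximal independent subsets of `A`. -/
noncomputable def basesRestrict {n : ℕ} (𝓑 : Finset (Finset (Fin n))) (A : Finset (Fin n)) :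
    Finset (Finset (Fin n)) :=
  A.powerset.filter (fun I => mIndep 𝓑 I ∧ ∀ J ∈ A.powerset, mIndep 𝓑 J → I ⊆ J → I = J)

/-- The bases of the contraction `M/A`: sets `I` disjoint from `A` such that `I ∪ B_A` is a basis
for some basis `B_A` of `M|_A`. -/
noncomputable def basesContract {n : ℕ} (𝓑 : Finset (Finset (Fin n))) (A : Finset (Fin n)) :
    Finset (Finset (Fin n)) :=
  (Finset.univ : Finset (Fin n)).powerset.filter
    (fun I => Disjoint I A ∧ ∃ BA ∈ basesRestrict 𝓑 A, I ∪ BA ∈ 𝓑)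

/-- The bases of the minor `(M|_X)/Y`. -/
noncomputable def minorBases {n : ℕ} (𝓑 : Finset (Finset (Fin n))) (X Y : Finset (Fin n)) :
    Finset (Finset (Fin n)) :=
  basesContract (basesRestrict 𝓑 X) Y

/-- The rank `r(A)` of a subset `A`: the size of a basis of `M|_A`. -/
noncomputable def rankOf {n : ℕ} (𝓑 : Finset (Finset (Fin n))) (A : Finset (Fin n)) : ℕ :=
  (basesRestrict 𝓑 A).sup Finset.card

/-- The bases of the matroid `M/F = M_ω` attached to a flag `F` (for any `ω` in the relative
interior of the braid cone of `F`): the bases of maximum `ω`-weight, i.e. those `B` with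
`|B ∩ F_i| = r(F_i)` for every member `F_i` of the full chain of the flag. -/
noncomputable def flagQuotBases {n : ℕ} (𝓑 : Finset (Finset (Fin n))) (C : Finset (Finset (Fin n))) :
    Finset (Finset (Fin n)) :=
  𝓑.filter (fun B => ∀ j ∈ Finset.range (C.card + 2), (B ∩ fullChain C j).card = rankOf 𝓑 (fullChain C j))

/-- The rank statistic `rk_{P_M}(F) = Σ_j rk((M|_{F_j})/F_{j-1})` of a flag, where
`rk(N) = (size of ground set of N) - c(N)`. -/
noncomputable def rkM {n : ℕ} (𝓑 : Finset (Finset (Fin n))) (C : Finset (Finset (Fin n))) : ℕ :=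
  ∑ j ∈ Finset.range (C.card + 1),
    ((fullChain C (j + 1)).card - (fullChain C j).card -
      cOn ((fullChain C (j + 1)) \ (fullChain C j))
        (minorBases 𝓑 (fullChain C (j + 1)) (fullChain C j)))

/-- The bases of the uniform matroid `U_{n,r}`: all `r`-element subsets of `[n]`; the
corresponding base polytope is the hypersimplex `Δ_r^n`. -/
def uniformBases (n r : ℕ) : Finset (Finset (Fin n)) :=
  (Finset.univ : Finset (Fin n)).powersetCard r

noncomputable def dotLin {n : ℕ} (ω : Fin n → ℝ) : (Fin n → ℝ) →ₗ[ℝ] ℝ where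
  toFun := dotp ω
  map_add' x y := by simp [dotp, mul_add, Finset.sum_add_distrib]
  map_smul' c x := by simp [dotp, Finset.mul_sum]; ring_nf; simp [mul_assoc, mul_comm, mul_left_comm]

lemma dotp_centerMass {n : ℕ} (ω : Fin n → ℝ) (V : Finset (Fin n → ℝ)) (w : (Fin n → ℝ) → ℝ)
    (hw : ∑ y ∈ V, w y = 1) :
    dotp ω (V.centerMass w id) = ∑ y ∈ V, w y * dotp ω y := by
  rw [Finset.centerMass_eq_of_sum_1 _ _ hw]
  have : dotp ω (∑ y ∈ V, w y • id y) = dotLin ω (∑ y ∈ V, w y • y) := rfl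
  rw [this, map_sum]
  simp [dotLin, smul_eq_mul]; rfl

/-- maximizers of `dotp ω` within `V`. -/
noncomputable def maxSet {n : ℕ} (V : Finset (Fin n → ℝ)) (ω : Fin n → ℝ) : Finset (Fin n → ℝ) :=
  V.filter (fun v => ∀ u ∈ V, dotp ω u ≤ dotp ω v)

lemma maxSet_nonempty {n : ℕ} (V : Finset (Fin n → ℝ)) (hV : V.Nonempty) (ω : Fin n → ℝ) :
    (maxSet V ω).Nonempty := by
  obtain ⟨b, hb, hmax⟩ := V.exists_max_image (dotp ω) hV
  exact ⟨b, Finset.mem_filter.2 ⟨hb, hmax⟩⟩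

lemma dotp_le_of_mem_hull {n : ℕ} (ω : Fin n → ℝ) (V : Finset (Fin n → ℝ)) (M : ℝ)
    (hM : ∀ u ∈ V, dotp ω u ≤ M) {x : Fin n → ℝ}
    (hx : x ∈ convexHull ℝ (V : Set (Fin n → ℝ))) : dotp ω x ≤ M := by
  rw [Finset.convexHull_eq] at hx
  obtain ⟨w, hw0, hw1, hxc⟩ := hx
  rw [← hxc, dotp_centerMass ω V w hw1]
  calc ∑ y ∈ V, w y * dotp ω y ≤ ∑ y ∈ V, w y * M := by
        apply Finset.sum_le_sum
        intro y hy
        exact mul_le_mul_of_nonneg_left (hM y hy) (hw0 y hy)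
    _ = M := by rw [← Finset.sum_mul, hw1, one_mul]

lemma argmaxSet_convexHull {n : ℕ} (V : Finset (Fin n → ℝ)) (hV : V.Nonempty) (ω : Fin n → ℝ) :
    argmaxSet (convexHull ℝ (V : Set (Fin n → ℝ))) ω
      = convexHull ℝ ((maxSet V ω : Set (Fin n → ℝ))) := by
  obtain ⟨v₀, hv₀⟩ := maxSet_nonempty V hV ω
  have hv₀V : v₀ ∈ V := (Finset.mem_filter.1 hv₀).1
  have hv₀max : ∀ u ∈ V, dotp ω u ≤ dotp ω v₀ := (Finset.mem_filter.1 hv₀).2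
  set M := dotp ω v₀ with hMdef
  have hWval : ∀ v ∈ maxSet V ω, dotp ω v = M := by
    intro v hv
    rcases Finset.mem_filter.1 hv with ⟨hvV, hvmax⟩
    exact le_antisymm (hv₀max v hvV) (hvmax v₀ hv₀V)
  have hWsub : (maxSet V ω : Set (Fin n → ℝ)) ⊆ V := fun v hv => Finset.filter_subset _ _ hv
  ext x
  constructor
  · rintro ⟨hxQ, hxmax⟩
    have hxM : dotp ω x = M := by
      refine le_antisymm (dotp_le_of_mem_hull ω V M hv₀max hxQ) ?_
      exact hxmax v₀ (subset_convexHull ℝ _ hv₀V)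
    rw [Finset.convexHull_eq] at hxQ
    obtain ⟨w, hw0, hw1, hxc⟩ := hxQ
    have hsum0 : ∑ y ∈ V, w y * (M - dotp ω y) = 0 := by
      have := dotp_centerMass ω V w hw1
      rw [hxc, hxM] at this
      have : ∑ y ∈ V, w y * (M - dotp ω y) = (∑ y ∈ V, w y) * M - ∑ y ∈ V, w y * dotp ω y := by
        rw [Finset.sum_mul, ← Finset.sum_sub_distrib]; congr 1; ext y; ring
      rw [this, hw1, one_mul]
      have h2 := dotp_centerMass ω V w hw1
      rw [hxc, hxM] at h2
      linarith
    have hterm : ∀ y ∈ V, w y * (M - dotp ω y) = 0 := by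
      refine (Finset.sum_eq_zero_iff_of_nonneg ?_).1 hsum0
      intro y hy
      have h1 := hw0 y hy
      have h2 : dotp ω y ≤ M := hv₀max y hy
      nlinarith
    -- support of w lies in maxSet
    have hsupp : V.filter (fun y => w y ≠ 0) ⊆ maxSet V ω := by
      intro y hy
      rcases Finset.mem_filter.1 hy with ⟨hyV, hyw⟩
      have := hterm y hyV
      have hyM : dotp ω y = M := by
        rcases mul_eq_zero.1 this with h | h
        · exact absurd h hyw
        · linarith
      refine Finset.mem_filter.2 ⟨hyV, fun u hu => ?_⟩
      rw [hyM]; exact hv₀max u hu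
    rw [← hxc, ← Finset.centerMass_filter_ne_zero id]
    apply Finset.centerMass_mem_convexHull
    · intro i hi; exact hw0 i (Finset.filter_subset _ _ hi)
    · rw [Finset.sum_filter_ne_zero]; rw [hw1]; norm_num
    · intro i hi; exact hsupp hi
  · intro hx
    have hxV : x ∈ convexHull ℝ (V : Set (Fin n → ℝ)) :=
      convexHull_mono hWsub hx
    refine ⟨hxV, fun y hy => ?_⟩
    have hxM : dotp ω x = M := by
      rw [Finset.convexHull_eq] at hx
      obtain ⟨w, hw0, hw1, hxc⟩ := hx
      rw [← hxc, dotp_centerMass ω _ w hw1]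
      rw [Finset.sum_congr rfl (fun y hy => by rw [hWval y hy])]
      rw [← Finset.sum_mul, hw1, one_mul]
    rw [hxM]
    exact dotp_le_of_mem_hull ω V M hv₀max hy


-- threshold existence
lemma exists_threshold {n r : ℕ} (hr : 0 < r) (hrn : r ≤ n) (ω : Fin n → ℝ) :
    ∃ θ : ℝ, (Finset.univ.filter (fun i => θ < ω i)).card < r ∧
      r ≤ (Finset.univ.filter (fun i => θ ≤ ω i)).card := by
  have hn : 0 < n := lt_of_lt_of_le hr hrn
  haveI : Nonempty (Fin n) := ⟨⟨0, hn⟩⟩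
  have himg : (Finset.univ.image ω).Nonempty :=
    Finset.Nonempty.image Finset.univ_nonempty ω
  set T := (Finset.univ.image ω).filter
    (fun t => r ≤ (Finset.univ.filter (fun i => t ≤ ω i)).card) with hT
  have hTne : T.Nonempty := by
    obtain ⟨t₀, ht₀, hmin⟩ := Finset.exists_min_image _ id himg
    refine ⟨t₀, Finset.mem_filter.2 ⟨ht₀, ?_⟩⟩
    have : Finset.univ.filter (fun i => t₀ ≤ ω i) = Finset.univ := by
      apply Finset.filter_true_of_mem
      intro i _
      exact hmin (ω i) (Finset.mem_image_of_mem ω (Finset.mem_univ i))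
    rw [this, Finset.card_univ, Fintype.card_fin]
    exact hrn
  set θ := T.max' hTne with hθ
  have hθT : θ ∈ T := T.max'_mem hTne
  refine ⟨θ, ?_, (Finset.mem_filter.1 hθT).2⟩
  by_cases hA : (Finset.univ.filter (fun i => θ < ω i)).Nonempty
  · obtain ⟨i₁, hi₁, hmin⟩ := Finset.exists_min_image _ ω hA
    set t'' := ω i₁ with ht''
    have ht''θ : θ < t'' := (Finset.mem_filter.1 hi₁).2
    have hset : Finset.univ.filter (fun i => t'' ≤ ω i)
        = Finset.univ.filter (fun i => θ < ω i) := by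
      apply Finset.filter_congr
      intro i _
      constructor
      · intro h; exact lt_of_lt_of_le ht''θ h
      · intro h; exact hmin i (Finset.mem_filter.2 ⟨Finset.mem_univ i, h⟩)
    have ht''nT : t'' ∉ T := by
      intro hmem
      exact absurd (T.le_max' t'' hmem) (not_le.2 ht''θ)
    have : ¬ r ≤ (Finset.univ.filter (fun i => t'' ≤ ω i)).card := by
      intro hc
      exact ht''nT (Finset.mem_filter.2 ⟨Finset.mem_image_of_mem ω (Finset.mem_univ i₁), hc⟩)
    rw [hset] at this
    omega
  · rw [Finset.not_nonempty_iff_eq_empty] at hA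
    rw [hA]
    simpa using hr

lemma sum_indicator_swap {n : ℕ} (ω : Fin n → ℝ) (B : Finset (Fin n)) {i j : Fin n}
    (hi : i ∈ B) (hj : j ∉ B) :
    ∑ p ∈ insert j (B.erase i), ω p = ∑ p ∈ B, ω p - ω i + ω j := by
  rw [Finset.sum_insert (fun h => hj (Finset.mem_of_mem_erase h))]
  rw [Finset.sum_erase_eq_sub hi]
  ring

/-- Characterization of maximizing r-subsets via a threshold. -/
lemma maximizer_iff {n r : ℕ} (ω : Fin n → ℝ) (θ : ℝ)
    (h1 : (Finset.univ.filter (fun i => θ < ω i)).card < r)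
    (h2 : r ≤ (Finset.univ.filter (fun i => θ ≤ ω i)).card)
    (B : Finset (Fin n)) (hB : B.card = r) :
    (∀ B' : Finset (Fin n), B'.card = r → ∑ p ∈ B', ω p ≤ ∑ p ∈ B, ω p)
      ↔ (Finset.univ.filter (fun i => θ < ω i) ⊆ B
          ∧ B ⊆ Finset.univ.filter (fun i => θ ≤ ω i)) := by
  set S := Finset.univ.filter (fun i => θ < ω i) with hS
  set Sge := Finset.univ.filter (fun i => θ ≤ ω i) with hSge
  constructor
  · intro hmax
    have hswap : ∀ i ∈ B, ∀ j, j ∉ B → ω j ≤ ω i := by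
      intro i hi j hj
      have hcard : (insert j (B.erase i)).card = r := by
        rw [Finset.card_insert_of_notMem (fun h => hj (Finset.mem_of_mem_erase h)),
          Finset.card_erase_of_mem hi, hB]
        omega
      have := hmax _ hcard
      rw [sum_indicator_swap ω B hi hj] at this
      linarith
    constructor
    · -- S ⊆ B
      intro j hjS
      by_contra hjB
      have hωj : θ < ω j := (Finset.mem_filter.1 hjS).2
      have hBS : B ⊆ S := by
        intro i hi
        refine Finset.mem_filter.2 ⟨Finset.mem_univ i, ?_⟩
        exact lt_of_lt_of_le hωj (hswap i hi j hjB)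
      have := Finset.card_le_card hBS
      omega
    · -- B ⊆ Sge
      intro i hiB
      by_contra hiSge
      have hωi : ω i < θ := by
        by_contra h
        exact hiSge (Finset.mem_filter.2 ⟨Finset.mem_univ i, le_of_not_gt h⟩)
      -- there exists j ∈ Sge \ B
      have hex : (Sge \ B).Nonempty := by
        rw [← Finset.card_pos]
        have h3 : (Sge ∩ B).card ≤ B.card - 1 := by
          have : Sge ∩ B ⊆ B.erase i := by
            intro p hp
            rcases Finset.mem_inter.1 hp with ⟨hp1, hp2⟩
            refine Finset.mem_erase.2 ⟨?_, hp2⟩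
            rintro rfl
            exact hiSge hp1
          have := Finset.card_le_card this
          rw [Finset.card_erase_of_mem hiB] at this
          exact this
        have h4 := Finset.card_sdiff_add_card_inter Sge B
        omega
      obtain ⟨j, hj⟩ := hex
      rcases Finset.mem_sdiff.1 hj with ⟨hjSge, hjB⟩
      have hωj : θ ≤ ω j := (Finset.mem_filter.1 hjSge).2
      have := hswap i hiB j hjB
      linarith
  · rintro ⟨hSB, hBSge⟩ B' hB'
    -- ∑_{B'} ≤ ∑_B : compare over symmetric difference
    have hcards : (B \ B').card = (B' \ B).card := by
      have h1 := Finset.card_sdiff_add_card_inter B B'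
      have h2 := Finset.card_sdiff_add_card_inter B' B
      rw [Finset.inter_comm] at h2
      omega
    have hlow : ∀ p ∈ B \ B', θ ≤ ω p := by
      intro p hp
      exact (Finset.mem_filter.1 (hBSge (Finset.mem_sdiff.1 hp).1)).2
    have hhigh : ∀ p ∈ B' \ B, ω p ≤ θ := by
      intro p hp
      rcases Finset.mem_sdiff.1 hp with ⟨_, hpB⟩
      by_contra h
      exact hpB (hSB (Finset.mem_filter.2 ⟨Finset.mem_univ p, lt_of_not_ge h⟩))
    have key : ∑ p ∈ B' \ B, ω p ≤ ∑ p ∈ B \ B', ω p := by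
      calc ∑ p ∈ B' \ B, ω p ≤ ∑ _p ∈ B' \ B, θ := Finset.sum_le_sum hhigh
        _ = (B' \ B).card • θ := by rw [Finset.sum_const]
        _ = (B \ B').card • θ := by rw [hcards]
        _ = ∑ _p ∈ B \ B', θ := by rw [Finset.sum_const]
        _ ≤ ∑ p ∈ B \ B', ω p := Finset.sum_le_sum hlow
    have e1 : ∑ p ∈ B, ω p = ∑ p ∈ B \ B', ω p + ∑ p ∈ B ∩ B', ω p := by
      rw [← Finset.sum_union (Finset.disjoint_sdiff_inter B B'), Finset.sdiff_union_inter]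
    have e2 : ∑ p ∈ B', ω p = ∑ p ∈ B' \ B, ω p + ∑ p ∈ B' ∩ B, ω p := by
      rw [← Finset.sum_union (Finset.disjoint_sdiff_inter B' B), Finset.sdiff_union_inter]
    have e3 : ∑ p ∈ B ∩ B', ω p = ∑ p ∈ B' ∩ B, ω p := by rw [Finset.inter_comm]
    linarith


lemma mem_uniformBases {n r : ℕ} {B : Finset (Fin n)} :
    B ∈ uniformBases n r ↔ B.card = r := by
  simp [uniformBases, Finset.mem_powersetCard_univ]

lemma dotp_indVec {n : ℕ} (ω : Fin n → ℝ) (B : Finset (Fin n)) :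
    dotp ω (indVec B) = ∑ p ∈ B, ω p := by
  unfold dotp indVec
  rw [Finset.sum_congr rfl (fun i _ => by rw [mul_ite, mul_one, mul_zero])]
  rw [Finset.sum_ite_mem, Finset.univ_inter]

lemma indVec_injective {n : ℕ} : Function.Injective (indVec (n := n)) := by
  intro A B h
  ext i
  by_contra hne
  have := congrFun h i
  unfold indVec at this
  by_cases hA : i ∈ A <;> by_cases hB : i ∈ B <;> simp_all


/-- the vertices of the face attached to `(S, T)`. -/
noncomputable def faceVerts (n r : ℕ) (S T : Finset (Fin n)) : Finset (Finset (Fin n)) :=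
  (uniformBases n r).filter (fun B => S ⊆ B ∧ B ⊆ T)

/-- the candidate face attached to `(S, T)`. -/
noncomputable def cface (n r : ℕ) (S T : Finset (Fin n)) : Set (Fin n → ℝ) :=
  convexHull ℝ (indVec '' ((faceVerts n r S T : Set (Finset (Fin n)))))

lemma basePoly_eq (n r : ℕ) :
    basePoly (uniformBases n r)
      = convexHull ℝ (((uniformBases n r).image indVec : Finset (Fin n → ℝ)) :
          Set (Fin n → ℝ)) := by
  rw [basePoly, Finset.coe_image]

lemma uniformBases_nonempty {n r : ℕ} (hrn : r ≤ n) : (uniformBases n r).Nonempty := by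
  obtain ⟨t, _, ht⟩ := Finset.exists_subset_card_eq (s := (Finset.univ : Finset (Fin n))) (n := r)
    (by simpa using hrn)
  exact ⟨t, mem_uniformBases.2 ht⟩

lemma maxSet_image_eq {n r : ℕ} (ω : Fin n → ℝ) (θ : ℝ)
    (h1 : (Finset.univ.filter (fun i => θ < ω i)).card < r)
    (h2 : r ≤ (Finset.univ.filter (fun i => θ ≤ ω i)).card) :
    maxSet ((uniformBases n r).image indVec) ω
      = (faceVerts n r (Finset.univ.filter (fun i => θ < ω i))
          (Finset.univ.filter (fun i => θ ≤ ω i))).image indVec := by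
  ext v
  simp only [maxSet, Finset.mem_filter, Finset.mem_image, faceVerts]
  constructor
  · rintro ⟨⟨B, hB, rfl⟩, hmax⟩
    refine ⟨B, ⟨⟨hB, ?_⟩, rfl⟩⟩
    rw [← maximizer_iff ω θ h1 h2 B (mem_uniformBases.1 hB)]
    intro B' hB'
    have := hmax (indVec B') ⟨B', mem_uniformBases.2 hB', rfl⟩
    rwa [dotp_indVec, dotp_indVec] at this
  · rintro ⟨B, hBf, rfl⟩
    rcases hBf with ⟨hB, hcond⟩
    refine ⟨⟨B, hB, rfl⟩, ?_⟩
    rintro u ⟨B', hB', rfl⟩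
    rw [dotp_indVec, dotp_indVec]
    exact (maximizer_iff ω θ h1 h2 B (mem_uniformBases.1 hB)).2 hcond B'
      (mem_uniformBases.1 hB')

lemma cface_isFace {n r : ℕ} (hr : 0 < r) {S T : Finset (Fin n)} (hST : S ⊆ T)
    (h1 : S.card < r) (h2 : r ≤ T.card) :
    IsFace (basePoly (uniformBases n r)) (cface n r S T) := by
  classical
  refine ⟨(fun i => if i ∈ S then (2:ℝ) else if i ∈ T then 1 else 0), ?_⟩
  set ω : Fin n → ℝ := fun i => if i ∈ S then (2:ℝ) else if i ∈ T then 1 else 0 with hω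
  have hfS : Finset.univ.filter (fun i => (1:ℝ) < ω i) = S := by
    ext i
    simp only [Finset.mem_filter, Finset.mem_univ, true_and, hω]
    by_cases hiS : i ∈ S <;> by_cases hiT : i ∈ T <;> simp [hiS, hiT] <;> norm_num
  have hfT : Finset.univ.filter (fun i => (1:ℝ) ≤ ω i) = T := by
    ext i
    simp only [Finset.mem_filter, Finset.mem_univ, true_and, hω]
    by_cases hiS : i ∈ S
    · have hiT := hST hiS
      simp [hiS, hiT]
    · by_cases hiT : i ∈ T <;> simp [hiS, hiT] <;> norm_num
  have h1' : (Finset.univ.filter (fun i => (1:ℝ) < ω i)).card < r := by rw [hfS]; exact h1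
  have h2' : r ≤ (Finset.univ.filter (fun i => (1:ℝ) ≤ ω i)).card := by rw [hfT]; exact h2
  have hrn : r ≤ n := le_trans h2 (by simpa using Finset.card_le_card (Finset.subset_univ T))
  rw [basePoly_eq, argmaxSet_convexHull _ ((uniformBases_nonempty hrn).image indVec) ω,
    maxSet_image_eq ω 1 h1' h2', hfS, hfT, cface, Finset.coe_image]

lemma isFace_iff {n r : ℕ} (hr : 0 < r) (hrn : r ≤ n) (G : Set (Fin n → ℝ)) :
    IsFace (basePoly (uniformBases n r)) G
      ↔ ∃ S T : Finset (Fin n), S ⊆ T ∧ S.card < r ∧ r ≤ T.card ∧ G = cface n r S T := by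
  constructor
  · rintro ⟨ω, rfl⟩
    obtain ⟨θ, h1, h2⟩ := exists_threshold hr hrn ω
    refine ⟨Finset.univ.filter (fun i => θ < ω i), Finset.univ.filter (fun i => θ ≤ ω i),
      ?_, h1, h2, ?_⟩
    · intro i hi
      exact Finset.mem_filter.2 ⟨Finset.mem_univ i, le_of_lt (Finset.mem_filter.1 hi).2⟩
    · rw [basePoly_eq, argmaxSet_convexHull _ ((uniformBases_nonempty hrn).image indVec) ω,
        maxSet_image_eq ω θ h1 h2, cface, Finset.coe_image]
  · rintro ⟨S, T, hST, h1, h2, rfl⟩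
    exact cface_isFace hr hST h1 h2


lemma convex_coord_eq {n : ℕ} (i : Fin n) (c : ℝ) :
    Convex ℝ {x : Fin n → ℝ | x i = c} := by
  intro x hx y hy a b ha hb hab
  simp only [Set.mem_setOf_eq] at *
  simp [Pi.add_apply, hx, hy]
  calc a * c + b * c = (a + b) * c := by ring
    _ = c := by rw [hab, one_mul]

lemma cface_coord_one {n r : ℕ} {S T : Finset (Fin n)} {i : Fin n} (hi : i ∈ S) :
    ∀ x ∈ cface n r S T, x i = 1 := by
  intro x hx
  refine convexHull_min ?_ (convex_coord_eq i 1) hx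
  rintro v ⟨B, hB, rfl⟩
  rw [Finset.mem_coe, faceVerts, Finset.mem_filter] at hB
  have : i ∈ B := hB.2.1 hi
  simp [indVec, this]

lemma cface_coord_zero {n r : ℕ} {S T : Finset (Fin n)} {i : Fin n} (hi : i ∉ T) :
    ∀ x ∈ cface n r S T, x i = 0 := by
  intro x hx
  refine convexHull_min ?_ (convex_coord_eq i 0) hx
  rintro v ⟨B, hB, rfl⟩
  rw [Finset.mem_coe, faceVerts, Finset.mem_filter] at hB
  have : i ∉ B := fun h => hi (hB.2.2 h)
  simp [indVec, this]

lemma exists_faceVert {n r : ℕ} {S T : Finset (Fin n)} (hST : S ⊆ T)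
    (h1 : S.card ≤ r) (h2 : r ≤ T.card) : ∃ B, B ∈ faceVerts n r S T := by
  obtain ⟨B, hSB, hBT, hcard⟩ := Finset.exists_subsuperset_card_eq hST h1 h2
  exact ⟨B, Finset.mem_filter.2 ⟨mem_uniformBases.2 hcard, hSB, hBT⟩⟩

lemma exists_faceVert_mem {n r : ℕ} {S T : Finset (Fin n)} (hST : S ⊆ T)
    (h1 : S.card < r) (h2 : r ≤ T.card) {i : Fin n} (hiT : i ∈ T) (hiS : i ∉ S) :
    ∃ B ∈ faceVerts n r S T, i ∈ B := by
  have hsub : insert i S ⊆ T := Finset.insert_subset hiT hST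
  have hc : (insert i S).card ≤ r := by
    rw [Finset.card_insert_of_notMem hiS]; omega
  obtain ⟨B, hSB, hBT, hcard⟩ := Finset.exists_subsuperset_card_eq hsub hc h2
  exact ⟨B, Finset.mem_filter.2 ⟨mem_uniformBases.2 hcard,
    le_trans (Finset.subset_insert i S) hSB, hBT⟩, hSB (Finset.mem_insert_self i S)⟩

lemma exists_faceVert_not_mem {n r : ℕ} {S T : Finset (Fin n)} (hST : S ⊆ T)
    (h1 : S.card ≤ r) (h2 : r < T.card) {i : Fin n} (hiS : i ∉ S) :
    ∃ B ∈ faceVerts n r S T, i ∉ B := by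
  have hsub : S ⊆ T.erase i := fun p hp =>
    Finset.mem_erase.2 ⟨fun h => hiS (h ▸ hp), hST hp⟩
  have hc : r ≤ (T.erase i).card := by
    by_cases hiT : i ∈ T
    · rw [Finset.card_erase_of_mem hiT]; omega
    · rw [Finset.erase_eq_of_notMem hiT]; omega
  obtain ⟨B, hSB, hBT, hcard⟩ := Finset.exists_subsuperset_card_eq hsub h1 hc
  exact ⟨B, Finset.mem_filter.2 ⟨mem_uniformBases.2 hcard, hSB,
    le_trans hBT (Finset.erase_subset i T)⟩, fun h => (Finset.mem_erase.1 (hBT h)).1 rfl⟩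

lemma vectorSpan_convexHull {n : ℕ} (s : Set (Fin n → ℝ)) :
    vectorSpan ℝ (convexHull ℝ s) = vectorSpan ℝ s := by
  rw [← direction_affineSpan, affineSpan_convexHull, direction_affineSpan]


lemma sum_indVec {n : ℕ} (B : Finset (Fin n)) : ∑ j, indVec B j = (B.card : ℝ) := by
  unfold indVec
  rw [Finset.sum_ite_mem, Finset.univ_inter, Finset.sum_const, nsmul_eq_mul, mul_one]

/-- Membership in the span of difference vectors. -/
lemma mem_span_diffs {n : ℕ} (F : Finset (Fin n)) (i₀ : Fin n) (hi₀ : i₀ ∈ F)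
    (x : Fin n → ℝ) (hsupp : ∀ j, j ∉ F → x j = 0) (hsum : ∑ j, x j = 0) :
    x ∈ Submodule.span ℝ
      ((fun i => indVec {i} - indVec ({i₀} : Finset (Fin n))) '' ((F.erase i₀ : Finset (Fin n)) : Set (Fin n))) := by
  have hxrep : x = ∑ i ∈ F.erase i₀, x i • (indVec {i} - indVec ({i₀} : Finset (Fin n))) := by
    funext j
    rw [Finset.sum_apply]
    by_cases hj₀ : j = i₀
    · subst hj₀
      have hterm : ∀ i ∈ F.erase j, (x i • (indVec {i} - indVec ({j} : Finset (Fin n)))) j = -x i := by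
        intro i hi
        have hij : j ≠ i := fun h => (Finset.mem_erase.1 hi).1 h.symm
        simp [indVec, Finset.mem_singleton, hij]
      rw [Finset.sum_congr rfl hterm, Finset.sum_neg_distrib]
      have hsum' : ∑ i ∈ F, x i = 0 := by
        rw [← hsum]
        exact Finset.sum_subset (Finset.subset_univ F) (fun j' _ hj' => hsupp j' hj')
      rw [← Finset.add_sum_erase F x hi₀] at hsum'
      linarith
    · by_cases hjF : j ∈ F.erase i₀
      · rw [Finset.sum_eq_single j]
        · simp [indVec, Finset.mem_singleton, hj₀]
        · intro i hi hij
          simp [indVec, Finset.mem_singleton, hj₀, Ne.symm hij]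
        · intro h; exact absurd hjF h
      · have hxj : x j = 0 := by
          apply hsupp
          intro hjF'
          exact hjF (Finset.mem_erase.2 ⟨hj₀, hjF'⟩)
        rw [hxj]
        symm
        apply Finset.sum_eq_zero
        intro i hi
        have hij : j ≠ i := fun h => hjF (h ▸ hi)
        simp [indVec, Finset.mem_singleton, hj₀, hij]
  rw [hxrep]
  apply Submodule.sum_mem
  intro i hi
  apply Submodule.smul_mem
  exact Submodule.subset_span ⟨i, hi, rfl⟩

lemma indVec_insert_sub {n : ℕ} (C : Finset (Fin n)) {i i₀ : Fin n}
    (hi : i ∉ C) (hi₀ : i₀ ∉ C) :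
    indVec (insert i C) - indVec (insert i₀ C) = indVec {i} - indVec ({i₀} : Finset (Fin n)) := by
  funext j
  by_cases hji : j = i
  · subst hji
    by_cases hji₀ : j = i₀
    · subst hji₀; simp
    · have hjC : j ∉ C := hi
      simp [indVec, Finset.mem_insert, hji₀, hjC, Finset.mem_singleton]
  · by_cases hji₀ : j = i₀
    · subst hji₀
      have hjC : j ∉ C := hi₀
      simp [indVec, Finset.mem_insert, hji, hjC, Finset.mem_singleton]
    · by_cases hjC : j ∈ C <;>
        simp [indVec, Finset.mem_insert, hji, hji₀, hjC, Finset.mem_singleton]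


lemma vectorSpan_cface {n r : ℕ} {S T : Finset (Fin n)} (hST : S ⊆ T)
    (h1 : S.card < r) (h2 : r < T.card) {i₀ : Fin n} (hi₀ : i₀ ∈ T \ S) :
    vectorSpan ℝ (cface n r S T)
      = Submodule.span ℝ
          ((fun i => indVec {i} - indVec ({i₀} : Finset (Fin n))) ''
            (((T \ S).erase i₀ : Finset (Fin n)) : Set (Fin n))) := by
  rw [cface, vectorSpan_convexHull]
  apply le_antisymm
  · rw [vectorSpan_def]
    apply Submodule.span_le.2
    rintro v hv
    rw [Set.mem_vsub] at hv
    obtain ⟨a, ha, b, hb, rfl⟩ := hv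
    obtain ⟨B, hB, rfl⟩ := ha
    obtain ⟨B', hB', rfl⟩ := hb
    rw [Finset.mem_coe, faceVerts, Finset.mem_filter] at hB hB'
    have hvsub : indVec B -ᵥ indVec B' = indVec B - indVec B' := rfl
    rw [hvsub]
    apply mem_span_diffs (T \ S) i₀ hi₀
    · intro j hj
      rw [Finset.mem_sdiff] at hj
      push_neg at hj
      simp only [Pi.sub_apply]
      by_cases hjT : j ∈ T
      · have hjS : j ∈ S := hj hjT
        rw [show indVec B j = 1 by simp [indVec, hB.2.1 hjS],
          show indVec B' j = 1 by simp [indVec, hB'.2.1 hjS]]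
        ring
      · have hb : j ∉ B := fun h => hjT (hB.2.2 h)
        have hb' : j ∉ B' := fun h => hjT (hB'.2.2 h)
        rw [show indVec B j = 0 by simp [indVec, hb],
          show indVec B' j = 0 by simp [indVec, hb']]
        ring
    · simp only [Pi.sub_apply]
      rw [Finset.sum_sub_distrib, sum_indVec, sum_indVec,
        mem_uniformBases.1 hB.1, mem_uniformBases.1 hB'.1, sub_self]
  · apply Submodule.span_le.2
    rintro v ⟨i, hi, rfl⟩
    rw [Finset.mem_coe, Finset.mem_erase] at hi
    obtain ⟨hii₀, hiTS⟩ := hi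
    rw [Finset.mem_sdiff] at hiTS hi₀
    -- find C with S ⊆ C ⊆ T.erase i |>.erase i₀, |C| = r - 1
    have hi₀e : i₀ ∈ T.erase i := Finset.mem_erase.2 ⟨fun h => hii₀ h.symm, hi₀.1⟩
    have hsub : S ⊆ (T.erase i).erase i₀ := by
      intro p hp
      exact Finset.mem_erase.2 ⟨fun h => hi₀.2 (h ▸ hp),
        Finset.mem_erase.2 ⟨fun h => hiTS.2 (h ▸ hp), hST hp⟩⟩
    have hcards : S.card ≤ r - 1 ∧ r - 1 ≤ ((T.erase i).erase i₀).card := by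
      rw [Finset.card_erase_of_mem hi₀e, Finset.card_erase_of_mem hiTS.1]
      omega
    obtain ⟨C, hSC, hCsub, hCcard⟩ :=
      Finset.exists_subsuperset_card_eq hsub hcards.1 hcards.2
    have hiC : i ∉ C := fun h => (Finset.mem_erase.1 ((Finset.mem_erase.1 (hCsub h)).2)).1 rfl
    have hi₀C : i₀ ∉ C := fun h => (Finset.mem_erase.1 (hCsub h)).1 rfl
    have hCT : C ⊆ T := le_trans hCsub (le_trans (Finset.erase_subset _ _) (Finset.erase_subset _ _))
    have hB1 : insert i C ∈ faceVerts n r S T := by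
      refine Finset.mem_filter.2 ⟨mem_uniformBases.2 ?_, le_trans hSC (Finset.subset_insert i C), Finset.insert_subset hiTS.1 hCT⟩
      rw [Finset.card_insert_of_notMem hiC, hCcard]
      omega
    have hB2 : insert i₀ C ∈ faceVerts n r S T := by
      refine Finset.mem_filter.2 ⟨mem_uniformBases.2 ?_, le_trans hSC (Finset.subset_insert i₀ C), Finset.insert_subset hi₀.1 hCT⟩
      rw [Finset.card_insert_of_notMem hi₀C, hCcard]
      omega
    show indVec {i} - indVec ({i₀} : Finset (Fin n)) ∈ _
    rw [← indVec_insert_sub C hiC hi₀C]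
    exact vsub_mem_vectorSpan ℝ (Set.mem_image_of_mem indVec hB1)
      (Set.mem_image_of_mem indVec hB2)

lemma linIndep_diffs {n : ℕ} (F : Finset (Fin n)) (i₀ : Fin n) :
    LinearIndependent ℝ
      (fun i : (F.erase i₀ : Finset (Fin n)) =>
        indVec {(i : Fin n)} - indVec ({i₀} : Finset (Fin n))) := by
  rw [Fintype.linearIndependent_iff]
  intro g hg i
  have := congrFun hg (i : Fin n)
  rw [Finset.sum_apply] at this
  have hi : (i : Fin n) ∈ F.erase i₀ := i.2
  have hii₀ : (i : Fin n) ≠ i₀ := (Finset.mem_erase.1 hi).1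
  rw [Finset.sum_eq_single i] at this
  · simpa [indVec, Finset.mem_singleton, hii₀] using this
  · intro b _ hb
    have hbne : (i : Fin n) ≠ (b : Fin n) := by
      intro h
      exact hb (Subtype.ext h.symm)
    simp [indVec, Finset.mem_singleton, hii₀, hbne]
  · intro h
    exact absurd (Finset.mem_univ i) h

lemma pdim_cface {n r : ℕ} {S T : Finset (Fin n)} (hST : S ⊆ T)
    (h1 : S.card < r) (h2 : r < T.card) :
    pdim (cface n r S T) = T.card - S.card - 1 := by
  have hTS : (T \ S).Nonempty := by
    rw [← Finset.card_pos, Finset.card_sdiff_of_subset hST]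
    omega
  obtain ⟨i₀, hi₀⟩ := hTS
  rw [pdim, vectorSpan_cface hST h1 h2 hi₀]
  have hrange : (fun i => indVec {i} - indVec ({i₀} : Finset (Fin n))) ''
        ((((T \ S).erase i₀ : Finset (Fin n))) : Set (Fin n))
      = Set.range (fun i : ((T \ S).erase i₀ : Finset (Fin n)) =>
          indVec {(i : Fin n)} - indVec ({i₀} : Finset (Fin n))) := by
    rw [Set.image_eq_range]
    rfl
  rw [hrange, finrank_span_eq_card (linIndep_diffs (T \ S) i₀)]
  rw [Fintype.card_coe, Finset.card_erase_of_mem hi₀, Finset.card_sdiff_of_subset hST]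

lemma pdim_singleton {n : ℕ} (x : Fin n → ℝ) : pdim ({x} : Set (Fin n → ℝ)) = 0 := by
  rw [pdim, vectorSpan_singleton]
  simp

lemma cface_eq_singleton {n r : ℕ} {S T : Finset (Fin n)} (hST : S ⊆ T)
    (h2 : r = T.card) : cface n r S T = {indVec T} := by
  have : faceVerts n r S T = {T} := by
    ext B
    rw [faceVerts, Finset.mem_filter, mem_uniformBases, Finset.mem_singleton]
    constructor
    · rintro ⟨hcard, _, hBT⟩
      exact Finset.eq_of_subset_of_card_le hBT (by omega)
    · rintro rfl
      exact ⟨h2.symm, hST, le_refl _⟩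
  rw [cface, this]
  simp


lemma indVec_mem_cface {n r : ℕ} {S T : Finset (Fin n)} {B : Finset (Fin n)}
    (hB : B ∈ faceVerts n r S T) : indVec B ∈ cface n r S T :=
  subset_convexHull ℝ _ (Set.mem_image_of_mem indVec hB)

lemma cface_recover_S {n r : ℕ} {S T : Finset (Fin n)} (hST : S ⊆ T)
    (h1 : S.card < r) (h2 : r < T.card) (i : Fin n) :
    i ∈ S ↔ ∀ x ∈ cface n r S T, x i = 1 := by
  constructor
  · intro hi
    exact cface_coord_one hi
  · intro h
    by_contra hiS
    by_cases hiT : i ∈ T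
    · obtain ⟨B, hB, hiB⟩ := exists_faceVert_not_mem hST (le_of_lt h1) h2 hiS
      have := h (indVec B) (indVec_mem_cface hB)
      simp [indVec, hiB] at this
    · obtain ⟨B, hB⟩ := exists_faceVert hST (le_of_lt h1) (le_of_lt h2)
      have h0 := cface_coord_zero (T := T) (S := S) (r := r) hiT (indVec B) (indVec_mem_cface hB)
      have h1' := h (indVec B) (indVec_mem_cface hB)
      rw [h0] at h1'
      norm_num at h1'

lemma cface_recover_T {n r : ℕ} {S T : Finset (Fin n)} (hST : S ⊆ T)
    (h1 : S.card < r) (h2 : r < T.card) (i : Fin n) :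
    i ∈ T ↔ ∃ x ∈ cface n r S T, x i ≠ 0 := by
  constructor
  · intro hiT
    by_cases hiS : i ∈ S
    · obtain ⟨B, hB⟩ := exists_faceVert hST (le_of_lt h1) (le_of_lt h2)
      refine ⟨indVec B, indVec_mem_cface hB, ?_⟩
      rw [cface_coord_one hiS (indVec B) (indVec_mem_cface hB)]
      norm_num
    · obtain ⟨B, hB, hiB⟩ := exists_faceVert_mem hST h1 (le_of_lt h2) hiT hiS
      refine ⟨indVec B, indVec_mem_cface hB, ?_⟩
      simp [indVec, hiB]
  · rintro ⟨x, hx, hxi⟩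
    by_contra hiT
    exact hxi (cface_coord_zero hiT x hx)

lemma cface_inj {n r : ℕ} {S T S' T' : Finset (Fin n)} (hST : S ⊆ T)
    (h1 : S.card < r) (h2 : r < T.card) (hST' : S' ⊆ T')
    (h1' : S'.card < r) (h2' : r < T'.card)
    (heq : cface n r S T = cface n r S' T') : S = S' ∧ T = T' := by
  constructor
  · ext i
    rw [cface_recover_S hST h1 h2, cface_recover_S hST' h1' h2', heq]
  · ext i
    rw [cface_recover_T hST h1 h2, cface_recover_T hST' h1' h2', heq]


noncomputable def pairsF (n r k : ℕ) : Finset (Finset (Fin n) × Finset (Fin n)) :=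
  (Finset.univ.powerset ×ˢ Finset.univ.powerset).filter
    (fun p => p.1 ⊆ p.2 ∧ p.1.card < r ∧ r < p.2.card ∧ p.2.card = p.1.card + k)

lemma mem_pairsF {n r k : ℕ} {p : Finset (Fin n) × Finset (Fin n)} :
    p ∈ pairsF n r k ↔ p.1 ⊆ p.2 ∧ p.1.card < r ∧ r < p.2.card ∧ p.2.card = p.1.card + k := by
  rw [pairsF, Finset.mem_filter, Finset.mem_product]
  simp [Finset.mem_powerset, Finset.subset_univ]

lemma faceSet_dim0 {n r : ℕ} (hr : 0 < r) (hrn : r ≤ n) :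
    {G : Set (Fin n → ℝ) | IsFace (basePoly (uniformBases n r)) G ∧ pdim G = 0}
      = (fun B => ({indVec B} : Set (Fin n → ℝ))) '' ↑(uniformBases n r) := by
  ext G
  simp only [Set.mem_setOf_eq, Set.mem_image, Finset.mem_coe]
  constructor
  · rintro ⟨hface, hdim⟩
    obtain ⟨S, T, hST, h1, h2, rfl⟩ := (isFace_iff hr hrn G).1 hface
    rcases eq_or_lt_of_le h2 with heq | hlt
    · exact ⟨T, mem_uniformBases.2 heq.symm, (cface_eq_singleton hST heq).symm⟩
    · rw [pdim_cface hST h1 hlt] at hdim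
      omega
  · rintro ⟨B, hB, rfl⟩
    constructor
    · have : cface n r ∅ B = {indVec B} :=
        cface_eq_singleton (Finset.empty_subset B) (mem_uniformBases.1 hB).symm
      rw [← this]
      exact cface_isFace hr (Finset.empty_subset B) (by simpa using hr)
        (le_of_eq (mem_uniformBases.1 hB).symm)
    · exact pdim_singleton _

lemma faceSet_dim_pos {n r : ℕ} (hr : 0 < r) (hrn : r ≤ n) (i : ℕ) (hi : 1 ≤ i) :
    {G : Set (Fin n → ℝ) | IsFace (basePoly (uniformBases n r)) G ∧ pdim G = i}
      = (fun p : Finset (Fin n) × Finset (Fin n) => cface n r p.1 p.2) '' ↑(pairsF n r (i + 1)) := by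
  ext G
  simp only [Set.mem_setOf_eq, Set.mem_image, Finset.mem_coe]
  constructor
  · rintro ⟨hface, hdim⟩
    obtain ⟨S, T, hST, h1, h2, rfl⟩ := (isFace_iff hr hrn G).1 hface
    rcases eq_or_lt_of_le h2 with heq | hlt
    · rw [cface_eq_singleton hST heq, pdim_singleton] at hdim
      omega
    · rw [pdim_cface hST h1 hlt] at hdim
      refine ⟨(S, T), mem_pairsF.2 ⟨hST, h1, hlt, ?_⟩, rfl⟩
      show T.card = S.card + (i + 1)
      have := Finset.card_le_card hST
      omega
  · rintro ⟨⟨S, T⟩, hp, rfl⟩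
    obtain ⟨hST, h1, h2, hcard⟩ := mem_pairsF.1 hp
    exact ⟨cface_isFace hr hST h1 (le_of_lt h2), by rw [pdim_cface hST h1 h2]; omega⟩

lemma card_pairsF {n r k : ℕ} (hk : 1 ≤ k) :
    (pairsF n r k).card
      = ∑ r' ∈ Finset.range (n + 1),
          (if r' < r ∧ r < r' + k ∧ r' + k ≤ n then n.choose r' * (n - r').choose k else 0) := by
  rw [Finset.card_eq_sum_card_fiberwise
    (f := fun p : Finset (Fin n) × Finset (Fin n) => p.1.card) (t := Finset.range (n + 1))
    (fun p _ => Finset.mem_range.2 (Nat.lt_succ_of_le (le_trans (Finset.card_le_card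
      (Finset.subset_univ p.1)) (by simp))))]
  apply Finset.sum_congr rfl
  intro r' _
  by_cases hcond : r' < r ∧ r < r' + k ∧ r' + k ≤ n
  · rw [if_pos hcond]
    have hsig : ((Finset.univ.powersetCard r' : Finset (Finset (Fin n))).sigma
        (fun S => (Finset.univ \ S).powersetCard k)).card
          = n.choose r' * (n - r').choose k := by
      rw [Finset.card_sigma]
      have hconst : ∀ S ∈ (Finset.univ.powersetCard r' : Finset (Finset (Fin n))),
          ((Finset.univ \ S).powersetCard k).card = (n - r').choose k := by
        intro S hS
        rw [Finset.card_powersetCard, Finset.card_sdiff_of_subset (Finset.subset_univ S),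
          Finset.card_univ, Fintype.card_fin, (Finset.mem_powersetCard.1 hS).2]
      rw [Finset.sum_congr rfl hconst, Finset.sum_const, smul_eq_mul,
        Finset.card_powersetCard, Finset.card_univ, Fintype.card_fin]
    rw [← hsig]
    refine (Finset.card_bij
      (fun (a : Σ _ : Finset (Fin n), Finset (Fin n)) _ => (a.1, a.1 ∪ a.2)) ?_ ?_ ?_).symm
    · rintro ⟨S, F⟩ ha
      rw [Finset.mem_sigma] at ha
      obtain ⟨hS, hF⟩ := ha
      rw [Finset.mem_powersetCard] at hS hF
      have hdisj : Disjoint S F :=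
        Finset.disjoint_left.2 (fun p hp hq => (Finset.mem_sdiff.1 (hF.1 hq)).2 hp)
      have hcards : (S ∪ F).card = r' + k := by
        rw [Finset.card_union_of_disjoint hdisj, hS.2, hF.2]
      refine Finset.mem_filter.2 ⟨mem_pairsF.2 ⟨Finset.subset_union_left, ?_, ?_, ?_⟩, ?_⟩
      · rw [hS.2]; exact hcond.1
      · rw [hcards]; exact hcond.2.1
      · rw [hcards, hS.2]
      · exact hS.2
    · rintro ⟨S, F⟩ ha ⟨S', F'⟩ hb heq
      rw [Prod.mk.injEq] at heq
      obtain ⟨h1, h2⟩ := heq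
      subst h1
      rw [Finset.mem_sigma] at ha hb
      have hdisj : Disjoint S F := Finset.disjoint_left.2
        (fun p hp hq => (Finset.mem_sdiff.1 ((Finset.mem_powersetCard.1 ha.2).1 hq)).2 hp)
      have hdisj' : Disjoint S F' := Finset.disjoint_left.2
        (fun p hp hq => (Finset.mem_sdiff.1 ((Finset.mem_powersetCard.1 hb.2).1 hq)).2 hp)
      have : F = F' := by
        rw [← Finset.union_sdiff_cancel_left hdisj, h2, Finset.union_sdiff_cancel_left hdisj']
      rw [this]
    · intro p hp
      rw [Finset.mem_filter] at hp
      obtain ⟨hpF, hpcard⟩ := hp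
      obtain ⟨hsub, hc1, hc2, hc3⟩ := mem_pairsF.1 hpF
      refine ⟨⟨p.1, p.2 \ p.1⟩, ?_, ?_⟩
      · rw [Finset.mem_sigma, Finset.mem_powersetCard, Finset.mem_powersetCard]
        refine ⟨⟨Finset.subset_univ _, hpcard⟩,
          Finset.sdiff_subset_sdiff (Finset.subset_univ _) (le_refl _), ?_⟩
        rw [Finset.card_sdiff_of_subset hsub, hc3]
        omega
      · show (p.1, p.1 ∪ p.2 \ p.1) = p
        rw [Finset.union_sdiff_of_subset hsub]
  · rw [if_neg hcond]
    rw [Finset.card_eq_zero, Finset.filter_eq_empty_iff]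
    intro p hp
    obtain ⟨hsub, h1, h2, hcard⟩ := mem_pairsF.1 hp
    intro hpc
    apply hcond
    have hTn : p.2.card ≤ n := le_trans (Finset.card_le_card (Finset.subset_univ p.2)) (by simp)
    omega


lemma ncard_dim0 {n r : ℕ} (hr : 0 < r) (hrn : r ≤ n) :
    Set.ncard {G : Set (Fin n → ℝ) | IsFace (basePoly (uniformBases n r)) G ∧ pdim G = 0}
      = n.choose r := by
  rw [faceSet_dim0 hr hrn]
  rw [Set.ncard_image_of_injOn (by
    intro A hA B hB hAB
    simp only [Set.singleton_eq_singleton_iff] at hAB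
    exact indVec_injective hAB)]
  rw [Set.ncard_coe_finset, uniformBases, Finset.card_powersetCard, Finset.card_univ,
    Fintype.card_fin]

lemma ncard_dim_pos {n r : ℕ} (hr : 0 < r) (hrn : r ≤ n) (i : ℕ) (hi : 1 ≤ i) :
    Set.ncard {G : Set (Fin n → ℝ) | IsFace (basePoly (uniformBases n r)) G ∧ pdim G = i}
      = (pairsF n r (i + 1)).card := by
  rw [faceSet_dim_pos hr hrn i hi]
  rw [Set.ncard_image_of_injOn (by
    rintro ⟨S, T⟩ hp ⟨S', T'⟩ hq hpq
    rw [Finset.mem_coe] at hp hq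
    obtain ⟨hST, h1, h2, _⟩ := mem_pairsF.1 hp
    obtain ⟨hST', h1', h2', _⟩ := mem_pairsF.1 hq
    obtain ⟨e1, e2⟩ := cface_inj hST h1 h2 hST' h1' h2' hpq
    rw [Prod.mk.injEq]
    exact ⟨e1, e2⟩)]
  rw [Set.ncard_coe_finset]

lemma trinom_eq {n r' k : ℕ} (h : r' + k ≤ n) :
    n.factorial / (r'.factorial * k.factorial * (n - r' - k).factorial)
      = n.choose r' * (n - r').choose k := by
  have h1 : r' ≤ n := by omega
  have h2 : k ≤ n - r' := by omega
  have e1 := Nat.choose_mul_factorial_mul_factorial h1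
  have e2 := Nat.choose_mul_factorial_mul_factorial h2
  have hnr : n - r' - k = n - r' - k := rfl
  apply Nat.div_eq_of_eq_mul_left
  · positivity
  · calc n.factorial = n.choose r' * r'.factorial * (n - r').factorial := e1.symm
      _ = n.choose r' * r'.factorial *
          ((n - r').choose k * k.factorial * (n - r' - k).factorial) := by rw [e2]
      _ = n.choose r' * (n - r').choose k *
          (r'.factorial * k.factorial * (n - r' - k).factorial) := by ring


/-- For the uniform matroid `U_{n,r}` with `0 < r < n`, the `f`-polynomial of
the hypersimplex `P_{U_{n,r}} = Δ_r^n` is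
`f(P_{U_{n,r}}, q) = C(n,r) + Σ_{0 ≤ r' < r < r'+λ ≤ n} C(n,r') C(n-r',λ) q^{λ-1}`.
Equivalently, the `f`-vector is `f₀ = C(n,r)` and, for `k = 2,…,n`,
`f_{k-1} = Σ_{0 ≤ r' < r < r'+k ≤ n} n!/(r'!·k!·(n-r'-k)!)`. -/
theorem fPoly_hypersimplex (n r : ℕ) (hr : 0 < r) (hrn : r < n) :
    (∀ q : ℚ, fPoly (basePoly (uniformBases n r)) q
        = (n.choose r : ℚ) +
          ∑ r' ∈ Finset.range (n + 1), ∑ l ∈ Finset.range (n + 1),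
            (if r' < r ∧ r < r' + l ∧ r' + l ≤ n
              then (n.choose r' : ℚ) * ((n - r').choose l : ℚ) * q ^ (l - 1) else 0)) ∧
    (Set.ncard {G : Set (Fin n → ℝ) | IsFace (basePoly (uniformBases n r)) G ∧ pdim G = 0}
        = n.choose r) ∧
    (∀ k : ℕ, 2 ≤ k → k ≤ n →
      Set.ncard {G : Set (Fin n → ℝ) |
          IsFace (basePoly (uniformBases n r)) G ∧ pdim G = k - 1}
        = ∑ r' ∈ Finset.range (n + 1),
            (if r' < r ∧ r < r' + k ∧ r' + k ≤ n
              then n.factorial / (r'.factorial * k.factorial * (n - r' - k).factorial)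
              else 0)) := by
  have hrn' : r ≤ n := le_of_lt hrn
  refine ⟨?_, ncard_dim0 hr hrn', ?_⟩
  · -- the f-polynomial identity
    intro q
    set g : ℕ → ℕ → ℚ := fun r' l =>
      if r' < r ∧ r < r' + l ∧ r' + l ≤ n
        then (n.choose r' : ℚ) * ((n - r').choose l : ℚ) * q ^ (l - 1) else 0 with hg
    have key : ∀ i ∈ Finset.range n,
        ((Set.ncard {G : Set (Fin n → ℝ) |
            IsFace (basePoly (uniformBases n r)) G ∧ pdim G = i} : ℚ) * q ^ i)
          = (if i = 0 then (n.choose r : ℚ) else 0) + ∑ r' ∈ Finset.range (n + 1), g r' (i + 1) := by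
      intro i _
      by_cases hi0 : i = 0
      · subst hi0
        rw [if_pos rfl, ncard_dim0 hr hrn', pow_zero, mul_one]
        have hz : ∀ r' ∈ Finset.range (n + 1), g r' 1 = 0 := by
          intro r' _
          rw [hg]
          apply if_neg
          rintro ⟨c1, c2, -⟩
          omega
        rw [Finset.sum_congr rfl hz, Finset.sum_const_zero, add_zero]
      · rw [if_neg hi0, zero_add, ncard_dim_pos hr hrn' i (by omega),
          card_pairsF (by omega), Nat.cast_sum, Finset.sum_mul]
        apply Finset.sum_congr rfl
        intro r' _
        by_cases hcond : r' < r ∧ r < r' + (i + 1) ∧ r' + (i + 1) ≤ n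
        · rw [if_pos hcond, hg]
          simp only []
          rw [if_pos hcond]
          have : i + 1 - 1 = i := by omega
          rw [this]
          push_cast
          ring
        · rw [if_neg hcond, hg]
          simp only []
          rw [if_neg hcond, Nat.cast_zero, zero_mul]
    rw [fPoly, Finset.sum_congr rfl key, Finset.sum_add_distrib]
    congr 1
    · rw [Finset.sum_ite_eq' (Finset.range n) 0 (fun _ => (n.choose r : ℚ))]
      rw [if_pos (Finset.mem_range.2 (by omega))]
    · rw [Finset.sum_comm]
      apply Finset.sum_congr rfl
      intro r' _
      rw [Finset.sum_range_succ' (g r') n]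
      have hg0 : g r' 0 = 0 := by
        rw [hg]
        apply if_neg
        rintro ⟨c1, c2, -⟩
        omega
      rw [hg0, add_zero]
  · -- the face numbers
    intro k hk2 hkn
    have hk1 : 1 ≤ k - 1 := by omega
    rw [ncard_dim_pos hr hrn' (k - 1) hk1]
    have hkk : k - 1 + 1 = k := by omega
    rw [hkk, card_pairsF (by omega)]
    apply Finset.sum_congr rfl
    intro r' _
    by_cases hcond : r' < r ∧ r < r' + k ∧ r' + k ≤ n
    · rw [if_pos hcond, if_pos hcond, trinom_eq hcond.2.2]
    · rw [if_neg hcond, if_neg hcond]
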